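/- Let d be a positive integer, let γ > 0, r ≥ 0, b ≥ 0, G ≥ 0 be real numbers, and let T be a positive integer. For each 1 ≤ t ≤ T let ℓ_t : ℝ^d → ℝ be a differentiable convex function. Let η_1, …, η_T ∈ ℝ^d be gradient estimates satisfying ‖η_t − ∇ℓ_t(θ_t)‖ ≤ b and ‖η_t‖² ≤ G for all t, let θ_1, …, θ_{T+1} ∈ ℝ^d be generated by θ_{t+1} = θ_t − γ·η_t, and let w_1, …, w_{T+1} ∈ ℝ^d be comparators, with ‖θ_t‖ ≤ r and ‖w_t‖ ≤ r for all 1 ≤ t ≤ T+1. Then Σ_{t=1}^{T} (ℓ_t(θ_t) − ℓ_t(w_t)) ≤ 2·T·b·r + (2r²)/γ + (2r/γ)·Σ_{t=1}^{T} ‖w_t − w_{t+1}‖ + (T·γ·G)/2. -/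

import Mathlib

open scoped RealInnerProductSpace

lemma convex_grad_ineq {E : Type*} [NormedAddCommGroup E] [InnerProductSpace ℝ E]
    [CompleteSpace E] {f : E → ℝ}
    (hd : Differentiable ℝ f) (hc : ConvexOn ℝ Set.univ f) (x y : E) :
    f x - f y ≤ ⟪gradient f x, x - y⟫ := by
  set g : ℝ → E := fun s => x + s • (y - x) with hg
  have hpath : HasDerivAt g (y - x) 0 := by
    have : HasDerivAt (fun s : ℝ => s • (y - x)) ((1 : ℝ) • (y - x)) 0 :=
      (hasDerivAt_id (0:ℝ)).smul_const (y - x)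
    have h2 := this.const_add x
    simp only [one_smul] at h2
    exact h2
  have hgrad := (hd x).hasGradientAt
  have hF : HasFDerivAt f (InnerProductSpace.toDual ℝ E (gradient f x)) x :=
    hgrad.hasFDerivAt
  have hcomp : HasDerivAt (f ∘ g) ⟪gradient f x, y - x⟫ 0 := by
    have hF' : HasFDerivAt f (InnerProductSpace.toDual ℝ E (gradient f x)) (g 0) := by
      simpa [hg] using hF
    have := hF'.comp_hasDerivAt 0 hpath
    simpa [InnerProductSpace.toDual_apply_apply] using this
  have hconvg : ConvexOn ℝ Set.univ (f ∘ g) := by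
    have := hc.comp_affineMap (AffineMap.lineMap x y : ℝ →ᵃ[ℝ] E)
    have heq : f ∘ (AffineMap.lineMap x y : ℝ →ᵃ[ℝ] E) = f ∘ g := by
      funext s
      simp [hg, AffineMap.lineMap_apply, Function.comp]
      congr 1
      module
    simpa [heq] using this
  have hle := hconvg.le_slope_of_hasDerivAt (Set.mem_univ (0:ℝ)) (Set.mem_univ (1:ℝ))
    one_pos hcomp
  have hs : slope (f ∘ g) 0 1 = f y - f x := by
    simp [slope, hg, Function.comp]
  rw [hs] at hle
  have hneg : ⟪gradient f x, y - x⟫ = -⟪gradient f x, x - y⟫ := by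
    rw [← inner_neg_right]; congr 1; abel
  linarith [hneg ▸ hle]

lemma telescope_Icc (f : ℕ → ℝ) (T : ℕ) :
    ∑ t ∈ Finset.Icc 1 T, (f t - f (t + 1)) = f 1 - f (T + 1) := by
  induction T with
  | zero => simp
  | succ n ih =>
    rw [Finset.sum_Icc_succ_top (by omega : 1 ≤ n + 1), ih]
    ring

/-- Dynamic regret bound for online gradient descent with biased gradient estimates
(deterministic version): with estimates `η t` satisfying `‖η t - ∇ℓ t (θ t)‖ ≤ b` and
`‖η t‖² ≤ G`, updates `θ (t+1) = θ t - γ • η t`, and iterates/comparators in the ball of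
radius `r`, the dynamic regret is at most `2Tbr + 2r²/γ + (2r/γ)·V + TγG/2`. -/
theorem ogd_dynamic_regret_biased (d : ℕ) (hd : 0 < d)
    (γ r b G : ℝ) (hγ : 0 < γ) (hr : 0 ≤ r) (hb : 0 ≤ b) (hG : 0 ≤ G)
    (T : ℕ) (hT : 0 < T)
    (ℓ : ℕ → EuclideanSpace ℝ (Fin d) → ℝ)
    (hdiff : ∀ t, 1 ≤ t → t ≤ T → Differentiable ℝ (ℓ t))
    (hconv : ∀ t, 1 ≤ t → t ≤ T → ConvexOn ℝ Set.univ (ℓ t))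
    (θ η w : ℕ → EuclideanSpace ℝ (Fin d))
    (hbias : ∀ t, 1 ≤ t → t ≤ T → ‖η t - gradient (ℓ t) (θ t)‖ ≤ b)
    (hηG : ∀ t, 1 ≤ t → t ≤ T → ‖η t‖ ^ 2 ≤ G)
    (hupd : ∀ t, 1 ≤ t → t ≤ T → θ (t + 1) = θ t - γ • η t)
    (hθ : ∀ t, 1 ≤ t → t ≤ T + 1 → ‖θ t‖ ≤ r)
    (hw : ∀ t, 1 ≤ t → t ≤ T + 1 → ‖w t‖ ≤ r) :
    ∑ t ∈ Finset.Icc 1 T, (ℓ t (θ t) - ℓ t (w t)) ≤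
      2 * (T : ℝ) * b * r + 2 * r ^ 2 / γ
        + (2 * r / γ) * ∑ t ∈ Finset.Icc 1 T, ‖w t - w (t + 1)‖
        + (T : ℝ) * γ * G / 2 := by
  have h2γ : (0:ℝ) < 2 * γ := by linarith
  have key : ∀ t ∈ Finset.Icc 1 T,
      ℓ t (θ t) - ℓ t (w t) ≤
        2 * b * r + (‖θ t - w t‖ ^ 2 - ‖θ (t+1) - w (t+1)‖ ^ 2) / (2 * γ)
          + (2 * r / γ) * ‖w t - w (t + 1)‖ + γ * G / 2 := by
    intro t ht
    rw [Finset.mem_Icc] at ht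
    obtain ⟨ht1, ht2⟩ := ht
    have ht1' : (1:ℕ) ≤ t + 1 := by omega
    have ht2' : t + 1 ≤ T + 1 := by omega
    -- convexity
    have step1 : ℓ t (θ t) - ℓ t (w t) ≤ ⟪gradient (ℓ t) (θ t), θ t - w t⟫ :=
      convex_grad_ineq (hdiff t ht1 ht2) (hconv t ht1 ht2) (θ t) (w t)
    -- split inner product
    have step2 : ⟪gradient (ℓ t) (θ t), θ t - w t⟫
        = ⟪η t, θ t - w t⟫ + ⟪gradient (ℓ t) (θ t) - η t, θ t - w t⟫ := by
      rw [inner_sub_left]; ring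
    -- bias term
    have step3 : ⟪gradient (ℓ t) (θ t) - η t, θ t - w t⟫ ≤ 2 * b * r := by
      have h1 : ⟪gradient (ℓ t) (θ t) - η t, θ t - w t⟫
          ≤ ‖gradient (ℓ t) (θ t) - η t‖ * ‖θ t - w t‖ := real_inner_le_norm _ _
      have h2 : ‖gradient (ℓ t) (θ t) - η t‖ ≤ b := by
        rw [norm_sub_rev]; exact hbias t ht1 ht2
      have h3 : ‖θ t - w t‖ ≤ 2 * r := by
        have := norm_sub_le (θ t) (w t)
        have := hθ t ht1 (by omega)
        have := hw t ht1 (by omega)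
        linarith
      calc ⟪gradient (ℓ t) (θ t) - η t, θ t - w t⟫
          ≤ ‖gradient (ℓ t) (θ t) - η t‖ * ‖θ t - w t‖ := h1
        _ ≤ b * (2 * r) := by
            apply mul_le_mul h2 h3 (norm_nonneg _) hb
        _ = 2 * b * r := by ring
    -- expansion of update
    have step4 : ⟪η t, θ t - w t⟫
        = (‖θ t - w t‖ ^ 2 - ‖θ (t+1) - w t‖ ^ 2) / (2 * γ) + γ * ‖η t‖ ^ 2 / 2 := by
      have hu : θ (t+1) - w t = (θ t - w t) - γ • η t := by
        rw [hupd t ht1 ht2]; abel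
      have hexp : ‖θ (t+1) - w t‖ ^ 2
          = ‖θ t - w t‖ ^ 2 - 2 * (γ * ⟪η t, θ t - w t⟫) + γ ^ 2 * ‖η t‖ ^ 2 := by
        rw [hu, norm_sub_sq_real, real_inner_smul_right, real_inner_comm, norm_smul]
        rw [Real.norm_eq_abs, abs_of_pos hγ]
        ring
      set I := ⟪η t, θ t - w t⟫
      set A := ‖θ t - w t‖ ^ 2
      set B := ‖θ (t+1) - w t‖ ^ 2
      set N := ‖η t‖ ^ 2
      rw [hexp]
      field_simp
      ring
    -- comparison of distances
    have step5 : ‖θ (t+1) - w (t+1)‖ ^ 2 - 4 * r * ‖w t - w (t+1)‖ ≤ ‖θ (t+1) - w t‖ ^ 2 := by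
      have hdecomp : θ (t+1) - w t = (θ (t+1) - w (t+1)) + (w (t+1) - w t) := by abel
      have hexp : ‖θ (t+1) - w t‖ ^ 2
          = ‖θ (t+1) - w (t+1)‖ ^ 2
            + 2 * ⟪θ (t+1) - w (t+1), w (t+1) - w t⟫ + ‖w (t+1) - w t‖ ^ 2 := by
        rw [hdecomp, norm_add_sq_real]
      have hip : |⟪θ (t+1) - w (t+1), w (t+1) - w t⟫|
          ≤ ‖θ (t+1) - w (t+1)‖ * ‖w (t+1) - w t‖ := abs_real_inner_le_norm _ _
      have ha : ‖θ (t+1) - w (t+1)‖ ≤ 2 * r := by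
        have := norm_sub_le (θ (t+1)) (w (t+1))
        have := hθ (t+1) ht1' ht2'
        have := hw (t+1) ht1' ht2'
        linarith
      have hc : ‖w (t+1) - w t‖ = ‖w t - w (t+1)‖ := norm_sub_rev _ _
      have habs := abs_le.mp hip
      nlinarith [norm_nonneg (w (t+1) - w t), norm_nonneg (θ (t+1) - w (t+1)),
        sq_nonneg (‖w (t+1) - w t‖)]
    -- step 5 divided
    have step5' : (‖θ t - w t‖ ^ 2 - ‖θ (t+1) - w t‖ ^ 2) / (2 * γ)
        ≤ (‖θ t - w t‖ ^ 2 - ‖θ (t+1) - w (t+1)‖ ^ 2) / (2 * γ)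
          + (2 * r / γ) * ‖w t - w (t+1)‖ := by
      have h1 : (‖θ t - w t‖ ^ 2 - ‖θ (t+1) - w t‖ ^ 2) / (2 * γ)
          ≤ (‖θ t - w t‖ ^ 2 - (‖θ (t+1) - w (t+1)‖ ^ 2 - 4 * r * ‖w t - w (t+1)‖)) / (2 * γ) := by
        apply (div_le_div_iff_of_pos_right h2γ).mpr
        linarith [step5]
      have h2 : (‖θ t - w t‖ ^ 2 - (‖θ (t+1) - w (t+1)‖ ^ 2 - 4 * r * ‖w t - w (t+1)‖)) / (2 * γ)
          = (‖θ t - w t‖ ^ 2 - ‖θ (t+1) - w (t+1)‖ ^ 2) / (2 * γ)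
            + (2 * r / γ) * ‖w t - w (t+1)‖ := by
        field_simp
        ring
      linarith [h1, h2 ▸ h1]
    have step6 : γ * ‖η t‖ ^ 2 / 2 ≤ γ * G / 2 := by
      have := hηG t ht1 ht2
      nlinarith
    have main := step2 ▸ step1
    linarith [main, step3, step4 ▸ le_refl ⟪η t, θ t - w t⟫, step5', step6,
      step4.le, step4.ge]
  set f : ℕ → ℝ := fun t => ‖θ t - w t‖ ^ 2 with hf
  calc ∑ t ∈ Finset.Icc 1 T, (ℓ t (θ t) - ℓ t (w t))
      ≤ ∑ t ∈ Finset.Icc 1 T,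
          (2 * b * r + (f t - f (t+1)) / (2 * γ)
            + (2 * r / γ) * ‖w t - w (t + 1)‖ + γ * G / 2) := Finset.sum_le_sum key
    _ = (T : ℝ) * (2 * b * r) + (f 1 - f (T+1)) / (2 * γ)
          + (2 * r / γ) * ∑ t ∈ Finset.Icc 1 T, ‖w t - w (t + 1)‖
          + (T : ℝ) * (γ * G / 2) := by
        rw [Finset.sum_add_distrib, Finset.sum_add_distrib, Finset.sum_add_distrib,
          Finset.sum_const, Finset.sum_const, ← Finset.sum_div, telescope_Icc f T,
          ← Finset.mul_sum]
        simp [Nat.card_Icc, nsmul_eq_mul]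
    _ ≤ 2 * (T : ℝ) * b * r + 2 * r ^ 2 / γ
          + (2 * r / γ) * ∑ t ∈ Finset.Icc 1 T, ‖w t - w (t + 1)‖
          + (T : ℝ) * γ * G / 2 := by
        have hf1 : f 1 ≤ 4 * r ^ 2 := by
          have h1 : ‖θ 1 - w 1‖ ≤ 2 * r := by
            have := norm_sub_le (θ 1) (w 1)
            have := hθ 1 le_rfl (by omega)
            have := hw 1 le_rfl (by omega)
            linarith
          have := norm_nonneg (θ 1 - w 1)
          simp only [hf]
          nlinarith
        have hfT : 0 ≤ f (T+1) := sq_nonneg _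
        have hdiv : (f 1 - f (T+1)) / (2 * γ) ≤ 2 * r ^ 2 / γ := by
          have h1 : (f 1 - f (T+1)) / (2 * γ) ≤ (4 * r ^ 2) / (2 * γ) := by
            apply (div_le_div_iff_of_pos_right h2γ).mpr
            linarith
          have h2 : (4 * r ^ 2) / (2 * γ) = 2 * r ^ 2 / γ := by
            field_simp
            ring
          linarith [h2 ▸ h1]
        linarith
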